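/- arXiv:1409.6427 — 3 statements merged into one kernel-verified Lean document; each statement's English description precedes it below -/
import Mathlib

section
/- If a triangle ρ : r ∘ j ⟹ f exhibits r as a right extension of f along j in a bicategory M, and j is a fully faithful left adjoint (i.e. j has a right adjoint j* with invertible unit η : 1_A ≅ j* ∘ j), then ρ is invertible. -/
open CategoryTheory Bicategory

universe w v u

/-- `ρ : j ≫ r ⟶ f` exhibits `r` as a right extension of `f` along `j`. -/
def IsRightExt {M : Type u} [Bicategory.{w, v} M] {A B X : M} (j : A ⟶ B) (f : A ⟶ X)
    (r : B ⟶ X) (ρ : j ≫ r ⟶ f) : Prop :=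
  ∀ g : B ⟶ X, Function.Bijective (fun θ : g ⟶ r => j ◁ θ ≫ ρ)

/-- If `ρ : j ≫ r ⟶ f` exhibits `r` as a right extension of `f` along `j`, and `j` is a
fully faithful left adjoint (it has a right adjoint `j✶` with invertible unit
`𝟙 A ⟶ j ≫ j✶`), then `ρ` is invertible. -/
theorem isIso_of_isRightExt_of_fullyFaithful {M : Type u} [Bicategory.{w, v} M]
    {A B X : M} {j : A ⟶ B} {f : A ⟶ X} {r : B ⟶ X} {ρ : j ≫ r ⟶ f}
    (hρ : IsRightExt j f r ρ)
    (jₛ : B ⟶ A) (adj : Bicategory.Adjunction j jₛ) (ff : IsIso adj.unit) :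
    IsIso ρ := by
  obtain ⟨φ, hφ⟩ := (hρ (jₛ ≫ f)).2
    ((α_ j jₛ f).inv ≫ inv adj.unit ▷ f ≫ (λ_ f).hom)
  dsimp only at hφ
  have zig : (λ_ (j ≫ r)).inv ≫ adj.unit ▷ (j ≫ r) ≫ (α_ j jₛ (j ≫ r)).hom ≫
      j ◁ (α_ jₛ j r).inv ≫ j ◁ (adj.counit ▷ r) ≫ j ◁ (λ_ r).hom = 𝟙 (j ≫ r) := by
    calc _ = 𝟙 _ ⊗≫ (leftZigzag adj.unit adj.counit) ▷ r ⊗≫ 𝟙 _ := by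
          dsimp only [leftZigzag]; bicategory
      _ = 𝟙 _ := by rw [adj.left_triangle]; bicategory
  have zig' : j ◁ ((α_ jₛ j r).inv ≫ adj.counit ▷ r ≫ (λ_ r).hom) =
      (α_ j jₛ (j ≫ r)).inv ≫ inv adj.unit ▷ (j ≫ r) ≫ (λ_ (j ≫ r)).hom := by
    rw [← cancel_epi ((λ_ (j ≫ r)).inv ≫ adj.unit ▷ (j ≫ r) ≫ (α_ j jₛ (j ≫ r)).hom)]
    simp only [Bicategory.whiskerLeft_comp, Category.assoc]
    rw [zig]
    rw [Iso.hom_inv_id_assoc, ← comp_whiskerRight_assoc, IsIso.hom_inv_id]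
    simp
  have key : jₛ ◁ ρ ≫ φ = (α_ jₛ j r).inv ≫ adj.counit ▷ r ≫ (λ_ r).hom := by
    apply (hρ _).1
    dsimp only
    rw [Bicategory.whiskerLeft_comp, Category.assoc, hφ, zig',
      associator_inv_naturality_right_assoc, whisker_exchange_assoc,
      leftUnitor_naturality]
    simp
  refine ⟨(λ_ f).inv ≫ adj.unit ▷ f ≫ (α_ j jₛ f).hom ≫ j ◁ φ, ?_, ?_⟩
  · rw [leftUnitor_inv_naturality_assoc, whisker_exchange_assoc,
      associator_naturality_right_assoc, ← Bicategory.whiskerLeft_comp, key]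
    rw [Bicategory.whiskerLeft_comp, Bicategory.whiskerLeft_comp]
    simpa using zig
  · rw [Category.assoc, Category.assoc, Category.assoc, hφ, Iso.hom_inv_id_assoc,
      ← comp_whiskerRight_assoc, IsIso.hom_inv_id]
    simp
end

section
/- Pasting a right extension triangle with an exact (Beck–Chevalley) square yields a right extension: suppose ρ : r ∘ j ⟹ f exhibits r as a (pointwise) right extension of f along j; suppose λ : j ∘ q ⟹ b ∘ p is a square of left adjoints whose mate λ̄ : p ∘ q* ⟹ b* ∘ j (using the adjunctions q ⊣ q* and b ⊣ b*) is invertible, and moreover r ≅ hom_A(j, f) as a right extension in the ambient bicategory. Then the pasting of λ and ρ exhibits r ∘ b as a right extension of f ∘ q along p. -/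
open CategoryTheory Bicategory

universe w v u

/-- The mate `λ̄ : p ∘ q✶ ⟶ b✶ ∘ j` (written diagrammatically `q✶ ≫ p ⟶ j ≫ b✶`) of a
square `lam : b ∘ p ⟶ j ∘ q` (diagrammatically `p ≫ b ⟶ q ≫ j`), formed using the
adjunctions `q ⊣ q✶` and `b ⊣ b✶`. -/
def mateOfSquare {M : Type u} [Bicategory.{w, v} M] {S A B U : M}
    {q : S ⟶ A} {p : S ⟶ U} {j : A ⟶ B} {b : U ⟶ B}
    (qs : A ⟶ S) (adjq : Bicategory.Adjunction q qs)
    (bs : B ⟶ U) (adjb : Bicategory.Adjunction b bs)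
    (lam : p ≫ b ⟶ q ≫ j) : qs ≫ p ⟶ j ≫ bs :=
  qs ◁ ((ρ_ p).inv ≫ p ◁ adjb.unit ≫ (α_ p b bs).inv ≫ lam ▷ bs ≫ (α_ q j bs).hom) ≫
    (α_ qs q (j ≫ bs)).inv ≫ adjq.counit ▷ (j ≫ bs) ≫ (λ_ (j ≫ bs)).hom

/-- The hom-set bijection induced by an adjunction `l ⊣ ra` in a bicategory:
`(u ⟶ l ≫ v) ≃ (ra ≫ u ⟶ v)`. -/
def adjHomEquiv {M : Type u} [Bicategory.{w, v} M] {a b x : M} {l : a ⟶ b} {ra : b ⟶ a}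
    (adj : Bicategory.Adjunction l ra) (u : a ⟶ x) (v : b ⟶ x) :
    (u ⟶ l ≫ v) ≃ (ra ≫ u ⟶ v) where
  toFun θ := ra ◁ θ ≫ (α_ ra l v).inv ≫ adj.counit ▷ v ≫ (λ_ v).hom
  invFun φ := (λ_ u).inv ≫ adj.unit ▷ u ≫ (α_ l ra u).hom ≫ l ◁ φ
  left_inv θ := by
    calc (λ_ u).inv ≫ adj.unit ▷ u ≫ (α_ l ra u).hom ≫
          l ◁ (ra ◁ θ ≫ (α_ ra l v).inv ≫ adj.counit ▷ v ≫ (λ_ v).hom)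
        _ = 𝟙 _ ⊗≫ (adj.unit ▷ u ≫ (l ≫ ra) ◁ θ) ⊗≫ l ◁ adj.counit ▷ v ⊗≫ 𝟙 _ := by
          bicategory
        _ = 𝟙 _ ⊗≫ θ ⊗≫ leftZigzag adj.unit adj.counit ▷ v ⊗≫ 𝟙 _ := by
          rw [← whisker_exchange]; bicategory
        _ = θ := by
          rw [adj.left_triangle]; bicategory
  right_inv φ := by
    calc ra ◁ ((λ_ u).inv ≫ adj.unit ▷ u ≫ (α_ l ra u).hom ≫ l ◁ φ) ≫
          (α_ ra l v).inv ≫ adj.counit ▷ v ≫ (λ_ v).hom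
        _ = 𝟙 _ ⊗≫ ra ◁ adj.unit ▷ u ⊗≫ ((ra ≫ l) ◁ φ ≫ adj.counit ▷ v) ⊗≫ 𝟙 _ := by
          bicategory
        _ = 𝟙 _ ⊗≫ rightZigzag adj.unit adj.counit ▷ u ⊗≫ φ ⊗≫ 𝟙 _ := by
          rw [whisker_exchange]; bicategory
        _ = φ := by
          rw [adj.right_triangle]; bicategory

/-- Pasting a (pointwise) right extension with an exact (Beck–Chevalley) square: if
`ρ : j ≫ r ⟶ f` exhibits `r` as a right extension of `f` along `j` in the ambient
bicategory (`r ≅ hom (j, f)`, the pointwise condition), and the square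
`lam : b ∘ p ⟶ j ∘ q` of left adjoints has invertible mate `λ̄ : p ∘ q✶ ⟶ b✶ ∘ j`,
then the pasting of `lam` and `ρ` exhibits `b ≫ r` (that is, `r ∘ b`) as a right
extension of `q ≫ f` (that is, `f ∘ q`) along `p`. -/
theorem isRightExt_paste_of_BC {M : Type u} [Bicategory.{w, v} M] {S A B U X : M}
    {q : S ⟶ A} {p : S ⟶ U} {j : A ⟶ B} {b : U ⟶ B} {f : A ⟶ X} {r : B ⟶ X}
    (qs : A ⟶ S) (adjq : Bicategory.Adjunction q qs)
    (bs : B ⟶ U) (adjb : Bicategory.Adjunction b bs)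
    (lam : p ≫ b ⟶ q ≫ j)
    (exact : IsIso (mateOfSquare qs adjq bs adjb lam))
    (ρ : j ≫ r ⟶ f) (hρ : IsRightExt j f r ρ) :
    IsRightExt p (q ≫ f) (b ≫ r)
      ((α_ p b r).inv ≫ lam ▷ r ≫ (α_ q j r).hom ≫ q ◁ ρ) := by
  haveI := exact
  intro g
  let e : qs ≫ p ≫ g ⟶ j ≫ bs ≫ g :=
    (α_ qs p g).inv ≫ mateOfSquare qs adjq bs adjb lam ▷ g ≫ (α_ j bs g).hom
  haveI : IsIso e := by dsimp only [e]; infer_instance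
  have key : (fun θ : g ⟶ b ≫ r =>
        p ◁ θ ≫ ((α_ p b r).inv ≫ lam ▷ r ≫ (α_ q j r).hom ≫ q ◁ ρ)) =
      ((adjHomEquiv adjq (p ≫ g) f).symm ∘ (fun χ : j ≫ bs ≫ g ⟶ f => e ≫ χ) ∘
        (fun φ : bs ≫ g ⟶ r => j ◁ φ ≫ ρ) ∘ (adjHomEquiv adjb g r)) := by
    funext θ
    symm
    show (λ_ (p ≫ g)).inv ≫ adjq.unit ▷ (p ≫ g) ≫ (α_ q qs (p ≫ g)).hom ≫
        q ◁ (((α_ qs p g).inv ≫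
            ((qs ◁ ((ρ_ p).inv ≫ p ◁ adjb.unit ≫ (α_ p b bs).inv ≫ lam ▷ bs ≫
              (α_ q j bs).hom) ≫ (α_ qs q (j ≫ bs)).inv ≫ adjq.counit ▷ (j ≫ bs) ≫
              (λ_ (j ≫ bs)).hom) ▷ g) ≫ (α_ j bs g).hom) ≫
          (j ◁ (bs ◁ θ ≫ (α_ bs b r).inv ≫ adjb.counit ▷ r ≫ (λ_ r).hom) ≫ ρ))
      = p ◁ θ ≫ ((α_ p b r).inv ≫ lam ▷ r ≫ (α_ q j r).hom ≫ q ◁ ρ)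
    calc (λ_ (p ≫ g)).inv ≫ adjq.unit ▷ (p ≫ g) ≫ (α_ q qs (p ≫ g)).hom ≫
          q ◁ (((α_ qs p g).inv ≫
              ((qs ◁ ((ρ_ p).inv ≫ p ◁ adjb.unit ≫ (α_ p b bs).inv ≫ lam ▷ bs ≫
                (α_ q j bs).hom) ≫ (α_ qs q (j ≫ bs)).inv ≫ adjq.counit ▷ (j ≫ bs) ≫
                (λ_ (j ≫ bs)).hom) ▷ g) ≫ (α_ j bs g).hom) ≫
            (j ◁ (bs ◁ θ ≫ (α_ bs b r).inv ≫ adjb.counit ▷ r ≫ (λ_ r).hom) ≫ ρ))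
        _ = 𝟙 _ ⊗≫ (adjq.unit ▷ (p ≫ g) ≫ (q ≫ qs) ◁
              (((ρ_ p).inv ≫ p ◁ adjb.unit ≫ (α_ p b bs).inv ≫ lam ▷ bs ≫
                (α_ q j bs).hom) ▷ g)) ⊗≫
            q ◁ adjq.counit ▷ ((j ≫ bs) ≫ g) ⊗≫ (q ≫ j) ◁ (bs ◁ θ) ⊗≫
            (q ≫ j) ◁ (adjb.counit ▷ r) ⊗≫ q ◁ ρ := by
          bicategory
        _ = 𝟙 _ ⊗≫ ((ρ_ p).inv ≫ p ◁ adjb.unit ≫ (α_ p b bs).inv ≫ lam ▷ bs ≫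
              (α_ q j bs).hom) ▷ g ⊗≫
            leftZigzag adjq.unit adjq.counit ▷ ((j ≫ bs) ≫ g) ⊗≫ (q ≫ j) ◁ (bs ◁ θ) ⊗≫
            (q ≫ j) ◁ (adjb.counit ▷ r) ⊗≫ q ◁ ρ := by
          rw [← whisker_exchange]; bicategory
        _ = 𝟙 _ ⊗≫ p ◁ adjb.unit ▷ g ⊗≫
            (lam ▷ (bs ≫ g) ≫ (q ≫ j) ◁ (bs ◁ θ)) ⊗≫
            (q ≫ j) ◁ (adjb.counit ▷ r) ⊗≫ q ◁ ρ := by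
          rw [adjq.left_triangle]; bicategory
        _ = 𝟙 _ ⊗≫ p ◁ adjb.unit ▷ g ⊗≫ (p ≫ b) ◁ (bs ◁ θ) ⊗≫
            (lam ▷ ((bs ≫ b) ≫ r) ≫ (q ≫ j) ◁ (adjb.counit ▷ r)) ⊗≫ q ◁ ρ := by
          rw [← whisker_exchange]; bicategory
        _ = 𝟙 _ ⊗≫ p ◁ (adjb.unit ▷ g ≫ (b ≫ bs) ◁ θ) ⊗≫
            (p ≫ b) ◁ (adjb.counit ▷ r) ⊗≫ lam ▷ r ⊗≫ q ◁ ρ := by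
          rw [← whisker_exchange]; bicategory
        _ = 𝟙 _ ⊗≫ p ◁ θ ⊗≫ p ◁ (leftZigzag adjb.unit adjb.counit ▷ r) ⊗≫
            lam ▷ r ⊗≫ q ◁ ρ := by
          rw [← whisker_exchange]; bicategory
        _ = p ◁ θ ≫ ((α_ p b r).inv ≫ lam ▷ r ≫ (α_ q j r).hom ≫ q ◁ ρ) := by
          rw [adjb.left_triangle]; bicategory
  rw [key]
  exact (adjHomEquiv adjq (p ≫ g) f).symm.bijective.comp
    (((asIso e).symm.homFromEquiv.bijective).comp
      ((hρ (bs ≫ g)).comp (adjHomEquiv adjb g r).bijective))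
end

section
/- In the comma square for ordinary categories, the Beck–Chevalley condition holds: given functors J : A ⟶ Bc and B : U ⟶ Bc, form the comma category B/J with projections D₁ : B/J ⟶ A and D₀ : B/J ⟶ U and canonical natural transformation λ : B ∘ D₀ ⟹ J ∘ D₁. Then in the bicategory of profunctors, the mate D₀* ∘ D₁^* ⟹ B^* ∘ J* of λ is invertible; concretely, the canonical map ∫^{(V, β : BV → JX, X)} A(X,A) × U(U,V) ⟶ Bc(BU, JA) sending (α, υ) at (V, β, X) to Jα ∘ β ∘ Bυ is a bijection for all objects U of U and A of A. -/
open CategoryTheory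

universe v₁ v₂ v₃ u₁ u₂ u₃

variable {𝒰 : Type u₁} [Category.{v₁} 𝒰] {𝒜 : Type u₂} [Category.{v₂} 𝒜]
  {ℬ : Type u₃} [Category.{v₃} ℬ]

/-- The relation generating the coend `∫^{(V, β : BV → JX, X)} 𝒜(X, A₀) × 𝒰(U₀, V)`
indexed by the comma category `B/J`. -/
def CoendRel (J : 𝒜 ⥤ ℬ) (B : 𝒰 ⥤ ℬ) (U₀ : 𝒰) (A₀ : 𝒜)
    (x y : Σ c : Comma B J, (c.right ⟶ A₀) × (U₀ ⟶ c.left)) : Prop :=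
  ∃ (c c' : Comma B J) (m : c ⟶ c') (α : c'.right ⟶ A₀) (υ : U₀ ⟶ c.left),
    x = ⟨c, (m.right ≫ α, υ)⟩ ∧ y = ⟨c', (α, υ ≫ m.left)⟩

/-- The coend `∫^{(V, β : BV → JX, X)} 𝒜(X, A₀) × 𝒰(U₀, V)`, i.e. the value
`(D₀* ∘ D₁^*)(U₀, A₀)` of the composite profunctor of the comma projections. -/
def CommaCoend (J : 𝒜 ⥤ ℬ) (B : 𝒰 ⥤ ℬ) (U₀ : 𝒰) (A₀ : 𝒜) : Type _ :=
  Quot (CoendRel J B U₀ A₀)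

/-- The canonical map `∫^{(V,β,X)} 𝒜(X,A₀) × 𝒰(U₀,V) ⟶ ℬ(B U₀, J A₀)`, which at the
component `(V, β : BV → JX, X)` sends `(α, υ)` to `Jα ∘ β ∘ Bυ`; it is the mate of the
canonical 2-cell of the comma square. -/
def commaCoendToHom (J : 𝒜 ⥤ ℬ) (B : 𝒰 ⥤ ℬ) (U₀ : 𝒰) (A₀ : 𝒜) :
    CommaCoend J B U₀ A₀ → (B.obj U₀ ⟶ J.obj A₀) :=
  Quot.lift (fun x => B.map x.2.2 ≫ x.1.hom ≫ J.map x.2.1) (by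
    rintro _ _ ⟨c, c', m, α, υ, rfl, rfl⟩
    dsimp
    rw [Functor.map_comp, Functor.map_comp, Category.assoc,
      ← reassoc_of% (CommaMorphism.w m)])


/-- Every element of the coend equals the canonical representative of its image. -/
theorem commaCoend_norm (J : 𝒜 ⥤ ℬ) (B : 𝒰 ⥤ ℬ) (U₀ : 𝒰) (A₀ : 𝒜)
    (x : Σ c : Comma B J, (c.right ⟶ A₀) × (U₀ ⟶ c.left)) :
    Quot.mk (CoendRel J B U₀ A₀) x =
      Quot.mk (CoendRel J B U₀ A₀)
        ⟨⟨U₀, A₀, B.map x.2.2 ≫ x.1.hom ≫ J.map x.2.1⟩, (𝟙 A₀, 𝟙 U₀)⟩ := by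
  obtain ⟨c, α, υ⟩ := x
  have step1 : Quot.mk (CoendRel J B U₀ A₀) ⟨c, (α, υ)⟩ =
      Quot.mk (CoendRel J B U₀ A₀) ⟨⟨c.left, A₀, c.hom ≫ J.map α⟩, (𝟙 A₀, υ)⟩ := by
    apply Quot.sound
    refine ⟨c, ⟨c.left, A₀, c.hom ≫ J.map α⟩,
      ⟨𝟙 c.left, α, by simp⟩, 𝟙 A₀, υ, ?_, ?_⟩ <;> simp
  have step2 : Quot.mk (CoendRel J B U₀ A₀)
      ((⟨⟨U₀, A₀, B.map υ ≫ c.hom ≫ J.map α⟩, (𝟙 A₀, 𝟙 U₀)⟩ :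
        Σ c : Comma B J, (c.right ⟶ A₀) × (U₀ ⟶ c.left))) =
      Quot.mk (CoendRel J B U₀ A₀) ⟨⟨c.left, A₀, c.hom ≫ J.map α⟩, (𝟙 A₀, υ)⟩ := by
    apply Quot.sound
    refine ⟨⟨U₀, A₀, B.map υ ≫ c.hom ≫ J.map α⟩, ⟨c.left, A₀, c.hom ≫ J.map α⟩,
      ⟨υ, 𝟙 A₀, by simp⟩, 𝟙 A₀, 𝟙 U₀, ?_, ?_⟩ <;> simp
  exact step1.trans step2.symm

/-- Beck–Chevalley for comma squares of ordinary categories: for functors `J : 𝒜 ⥤ ℬ`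
and `B : 𝒰 ⥤ ℬ`, the mate `D₀* ∘ D₁^* ⟶ B^* ∘ J*` of the canonical transformation of
the comma square is invertible; concretely, the canonical map
`∫^{(V, β : BV → JX, X)} 𝒜(X,A₀) × 𝒰(U₀,V) ⟶ ℬ(B U₀, J A₀)` is a bijection. -/
theorem comma_square_BC (J : 𝒜 ⥤ ℬ) (B : 𝒰 ⥤ ℬ) (U₀ : 𝒰) (A₀ : 𝒜) :
    Function.Bijective (commaCoendToHom J B U₀ A₀) := by
  constructor
  · intro x y h
    obtain ⟨x, rfl⟩ := Quot.exists_rep x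
    obtain ⟨y, rfl⟩ := Quot.exists_rep y
    rw [commaCoend_norm J B U₀ A₀ x, commaCoend_norm J B U₀ A₀ y]
    have : (B.map x.2.2 ≫ x.1.hom ≫ J.map x.2.1) =
        (B.map y.2.2 ≫ y.1.hom ≫ J.map y.2.1) := h
    rw [this]
  · intro f
    exact ⟨Quot.mk _ ⟨⟨U₀, A₀, f⟩, (𝟙 A₀, 𝟙 U₀)⟩, by simp [commaCoendToHom]⟩
end
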